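/- arXiv:2605.29608 — 2 statements merged into one kernel-verified Lean document; each statement's English description precedes it below -/
import Mathlib

section
/- Fix Ĵ ∈ [0,∞) and let (Y_k)_{k≥1} be the Markov chain on Ω with transition matrix P_W started from an arbitrary initial configuration Y₁ = σ ∈ Ω, with trajectory law ℙ_σ on Ω^ℕ (the canonical Markov-chain construction). Then for every function g : Ω → ℝ, ℙ_σ-almost surely, (1/M)·∑_{k=1}^{M} g(Y_k) → E_{μ_N}[g] as M → ∞. -/
open Real Finset

noncomputable section

/-- Spin value of a Boolean: `true ↦ +1`, `false ↦ -1`. -/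
def spin (b : Bool) : ℝ := if b then 1 else -1

/-- Configurations of the 1D Ising model on the cycle `ZMod N`. -/
abbrev Config (N : ℕ) := ZMod N → Bool

/-- Flip the spins of `σ` at all sites of `A`. -/
def flipSpins {N : ℕ} (A : Finset (ZMod N)) (σ : Config N) : Config N :=
  fun i => if i ∈ A then !(σ i) else σ i

/-- `A` is a (nonempty) arc `{a, a+1, …, a+k}` of the cycle. -/
def IsArc {N : ℕ} (A : Finset (ZMod N)) : Prop :=
  ∃ (a : ZMod N) (k : ℕ),
    A = Finset.image (fun t : ℕ => a + (t : ZMod N)) (Finset.range (k + 1))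

/-- `σ` is constant on `A`. -/
def ConstOn {N : ℕ} (σ : Config N) (A : Finset (ZMod N)) : Prop :=
  ∀ i ∈ A, ∀ j ∈ A, σ i = σ j

/-- The set of sites where two configurations differ. -/
def diffSet {N : ℕ} [NeZero N] (σ η : Config N) : Finset (ZMod N) :=
  Finset.univ.filter fun i => σ i ≠ η i

/-- The edge boundary of `A`: edges `(i, i+1)` with exactly one endpoint in `A`. -/
def edgeBoundary {N : ℕ} [NeZero N] (A : Finset (ZMod N)) : Finset (ZMod N) :=
  Finset.univ.filter fun i => ¬ ((i ∈ A) ↔ (i + 1 ∈ A))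

/-- Edges `(i, i+1)` on which the spins of `σ` agree (i.e. `σ_i · σ_{i+1} = +1`). -/
def Bplus {N : ℕ} [NeZero N] (σ : Config N) : Finset (ZMod N) :=
  Finset.univ.filter fun i => σ i = σ (i + 1)

open scoped Classical in
/-- Transition matrix of the Wolff dynamics for the 1D Ising model, with
`κ = 1 - e^{-2Ĵ}` and `κ̂ = e^{-2Ĵ}`. -/
noncomputable def PW (N : ℕ) [NeZero N] (J : ℝ) (σ η : Config N) : ℝ :=
  if IsArc (diffSet σ η) ∧ ConstOn σ (diffSet σ η) then
    if diffSet σ η = Finset.univ then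
      ((N : ℝ) * exp (-2 * J) + (1 - exp (-2 * J))) * (1 - exp (-2 * J)) ^ (N - 1)
    else
      ((diffSet σ η).card : ℝ) / N * (1 - exp (-2 * J)) ^ ((diffSet σ η).card - 1) *
        exp (-2 * J) ^ ((edgeBoundary (diffSet σ η) ∩ Bplus σ).card)
  else 0

/-- Energy functional `∑ i, σ_i σ_{i+1}` of a configuration. -/
noncomputable def energy (N : ℕ) [NeZero N] (σ : Config N) : ℝ :=
  ∑ i : ZMod N, spin (σ i) * spin (σ (i + 1))

/-- The Gibbs measure of the 1D Ising model with periodic boundary conditions. -/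
noncomputable def gibbs (N : ℕ) [NeZero N] (J : ℝ) (σ : Config N) : ℝ :=
  exp (J * energy N σ) / ∑ η : Config N, exp (J * energy N η)

/-- Expectation with respect to the Gibbs measure. -/
noncomputable def Emu (N : ℕ) [NeZero N] (J : ℝ) (f : Config N → ℝ) : ℝ :=
  ∑ σ : Config N, f σ * gibbs N J σ

/-- Dirichlet form of a transition matrix `P` with respect to a measure `μ`. -/
noncomputable def dirichlet (N : ℕ) [NeZero N] (P : Config N → Config N → ℝ)
    (μ : Config N → ℝ) (f : Config N → ℝ) : ℝ :=
  (1/2) * ∑ σ : Config N, ∑ η : Config N, (f σ - f η)^2 * P η σ * μ η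

section Comb
variable {N : ℕ} [NeZero N] {J : ℝ}

lemma spin_not (b : Bool) : spin (!b) = -spin b := by cases b <;> simp [spin]

lemma bool_ne_iff {a b : Bool} : a ≠ b ↔ b = !a := by cases a <;> cases b <;> simp

lemma kappa_nonneg (hJ : 0 ≤ J) : 0 ≤ 1 - exp (-2 * J) := by
  have : exp (-2 * J) ≤ 1 := by
    rw [Real.exp_le_one_iff]; nlinarith
  linarith

lemma PW_nonneg (hJ : 0 ≤ J) (σ η : Config N) : 0 ≤ PW N J σ η := by
  unfold PW
  have h1 := kappa_nonneg (J := J) hJ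
  have h2 := Real.exp_pos (-2 * J)
  have hN : (0:ℝ) ≤ N := by positivity
  split_ifs
  · positivity
  · positivity
  · exact le_refl _

lemma diffSet_comm (σ η : Config N) : diffSet σ η = diffSet η σ := by
  unfold diffSet; ext i; simp [ne_comm]

lemma flipSpins_diffSet (σ η : Config N) : flipSpins (diffSet σ η) σ = η := by
  funext i
  simp only [flipSpins, diffSet, Finset.mem_filter, Finset.mem_univ, true_and]
  by_cases h : σ i = η i
  · simp [h]
  · simp only [ne_eq, h, not_false_eq_true, if_true]
    exact (bool_ne_iff.mp h).symm

lemma mem_diffSet {σ η : Config N} {i : ZMod N} : i ∈ diffSet σ η ↔ σ i ≠ η i := by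
  simp [diffSet]

lemma diffSet_flipSpins (σ : Config N) (A : Finset (ZMod N)) :
    diffSet σ (flipSpins A σ) = A := by
  ext i
  simp only [mem_diffSet, flipSpins]
  by_cases h : i ∈ A <;> simp [h]

lemma isArc_singleton (i : ZMod N) : IsArc ({i} : Finset (ZMod N)) := by
  refine ⟨i, 0, ?_⟩
  simp

lemma card_univ_zmod : (Finset.univ : Finset (ZMod N)).card = N := by
  simpa using ZMod.card N

lemma PW_single_pos (hN : 3 ≤ N) (hJ : 0 ≤ J) (σ : Config N) (i : ZMod N) :
    0 < PW N J σ (flipSpins {i} σ) := by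
  have hd : diffSet σ (flipSpins {i} σ) = {i} := diffSet_flipSpins σ {i}
  unfold PW
  rw [hd]
  rw [if_pos ⟨isArc_singleton i, by intro a ha b hb; simp_all⟩]
  rw [if_neg (by
    intro h
    have h2 := card_univ_zmod (N := N)
    rw [← h] at h2
    simp at h2
    omega)]
  have h2 := Real.exp_pos (-2 * J)
  have hNpos : (0:ℝ) < N := by positivity
  simp only [Finset.card_singleton]
  norm_num
  positivity

end Comb

section Comb2
set_option linter.unusedSectionVars false
variable {N : ℕ} [NeZero N] {J : ℝ}

lemma diffSet_flip_erase {σ τ : Config N} {i : ZMod N} (hi : i ∈ diffSet σ τ) :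
    diffSet (flipSpins {i} σ) τ = (diffSet σ τ).erase i := by
  rw [mem_diffSet] at hi
  ext j
  simp only [mem_diffSet, Finset.mem_erase, flipSpins, Finset.mem_singleton]
  by_cases h : j = i
  · subst h
    simp only [if_pos rfl, ne_eq, not_true_eq_false, false_and, iff_false, not_not]
    rw [bool_ne_iff] at hi
    simp [hi]
  · simp [h, mem_diffSet]

lemma reach (Q : Config N → Prop)
    (hQ : ∀ σ i, Q σ → Q (flipSpins {i} σ)) :
    ∀ σ τ : Config N, Q σ → Q τ := by
  intro σ τ
  generalize hn : (diffSet σ τ).card = n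
  induction n generalizing σ with
  | zero =>
    intro h
    have : diffSet σ τ = ∅ := Finset.card_eq_zero.mp hn
    have hστ : σ = τ := by
      funext i
      by_contra hc
      have hm : i ∈ diffSet σ τ := mem_diffSet.mpr hc
      rw [this] at hm
      exact absurd hm (Finset.notMem_empty i)
    exact hστ ▸ h
  | succ n ih =>
    intro h
    have hne : (diffSet σ τ).Nonempty := Finset.card_pos.mp (by omega)
    obtain ⟨i, hi⟩ := hne
    have hcard : (diffSet (flipSpins {i} σ) τ).card = n := by
      rw [diffSet_flip_erase hi, Finset.card_erase_of_mem hi, hn]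
      omega
    exact ih _ hcard (hQ σ i h)

end Comb2

section Energy
set_option linter.unusedSectionVars false
variable {N : ℕ} [NeZero N] {J : ℝ}

lemma eta_apply (σ η : Config N) (i : ZMod N) :
    η i = if i ∈ diffSet σ η then !(σ i) else σ i := by
  conv_lhs => rw [← flipSpins_diffSet σ η]
  rfl

lemma bplus_flip (σ η : Config N) :
    edgeBoundary (diffSet σ η) ∩ Bplus η = edgeBoundary (diffSet σ η) \ Bplus σ := by
  ext i
  simp only [Finset.mem_inter, Finset.mem_sdiff, edgeBoundary, Bplus, Finset.mem_filter,
    Finset.mem_univ, true_and]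
  constructor
  · rintro ⟨hb, he⟩
    refine ⟨hb, ?_⟩
    intro hs
    rw [eta_apply σ η i, eta_apply σ η (i+1)] at he
    by_cases hi : i ∈ diffSet σ η <;> by_cases hi1 : (i+1) ∈ diffSet σ η <;>
      simp [hi, hi1] at he hb <;> simp_all
  · rintro ⟨hb, hs⟩
    refine ⟨hb, ?_⟩
    rw [eta_apply σ η i, eta_apply σ η (i+1)]
    by_cases hi : i ∈ diffSet σ η <;> by_cases hi1 : (i+1) ∈ diffSet σ η <;>
      simp [hi, hi1] at hb ⊢ <;> simp_all <;>
      (cases hσ : σ i <;> cases hσ1 : σ (i+1) <;> simp_all)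

lemma energy_sub (σ η : Config N) :
    energy N σ - energy N η =
      2 * ((edgeBoundary (diffSet σ η) ∩ Bplus σ).card : ℝ)
        - 2 * ((edgeBoundary (diffSet σ η) ∩ Bplus η).card : ℝ) := by
  set A := diffSet σ η with hA
  have hterm : ∀ i : ZMod N,
      spin (σ i) * spin (σ (i+1)) - spin (η i) * spin (η (i+1)) =
      (if i ∈ edgeBoundary A then (if i ∈ Bplus σ then (2:ℝ) else -2) else 0) := by
    intro i
    rw [eta_apply σ η i, eta_apply σ η (i+1)]
    simp only [edgeBoundary, Bplus, Finset.mem_filter, Finset.mem_univ, true_and, ← hA]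
    by_cases hi : i ∈ A <;> by_cases hi1 : (i+1) ∈ A <;>
      simp only [hi, hi1, if_true, if_false, spin_not, iff_true, not_true, not_false_iff,
        iff_false, iff_self] <;>
      (cases hσ : σ i <;> cases hσ1 : σ (i+1) <;> simp [spin] <;> ring)
  have h1 : energy N σ - energy N η =
      ∑ i : ZMod N, (if i ∈ edgeBoundary A then (if i ∈ Bplus σ then (2:ℝ) else -2) else 0) := by
    rw [energy, energy, ← Finset.sum_sub_distrib]
    exact Finset.sum_congr rfl fun i _ => hterm i
  rw [h1, Finset.sum_ite_mem, Finset.univ_inter, Finset.sum_ite, Finset.sum_const,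
    Finset.sum_const, Finset.filter_mem_eq_inter, bplus_flip σ η, ← hA]
  have : Finset.filter (fun i => ¬ i ∈ Bplus σ) (edgeBoundary A) = edgeBoundary A \ Bplus σ := by
    ext j; simp [Finset.mem_sdiff]
  rw [this]
  push_cast
  ring

lemma energy_const {σ : Config N} (h : ConstOn σ Finset.univ) : energy N σ = N := by
  have : ∀ i : ZMod N, spin (σ i) * spin (σ (i+1)) = 1 := by
    intro i
    have := h i (Finset.mem_univ i) (i+1) (Finset.mem_univ (i+1))
    rw [← this]
    cases σ i <;> simp [spin]
  rw [energy, Finset.sum_congr rfl fun i _ => this i, Finset.sum_const, card_univ_zmod]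
  simp

lemma constOn_symm (σ η : Config N) (h : ConstOn σ (diffSet σ η)) :
    ConstOn η (diffSet σ η) := by
  intro i hi j hj
  rw [eta_apply σ η i, eta_apply σ η j, if_pos hi, if_pos hj, h i hi j hj]

lemma detailed_balance (σ η : Config N) :
    exp (J * energy N σ) * PW N J σ η = exp (J * energy N η) * PW N J η σ := by
  by_cases hg : IsArc (diffSet σ η) ∧ ConstOn σ (diffSet σ η)
  · have hg' : IsArc (diffSet η σ) ∧ ConstOn η (diffSet η σ) := by
      rw [diffSet_comm η σ]
      exact ⟨hg.1, constOn_symm σ η hg.2⟩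
    unfold PW
    rw [if_pos hg, if_pos hg', diffSet_comm η σ]
    by_cases hu : diffSet σ η = Finset.univ
    · rw [if_pos hu, if_pos hu]
      have hσc : ConstOn σ Finset.univ := hu ▸ hg.2
      have hηc : ConstOn η Finset.univ := hu ▸ constOn_symm σ η hg.2
      rw [energy_const hσc, energy_const hηc]
    · rw [if_neg hu, if_neg hu]
      have hE := energy_sub σ η
      set b1 := (edgeBoundary (diffSet σ η) ∩ Bplus σ).card with hb1
      set b2 := (edgeBoundary (diffSet σ η) ∩ Bplus η).card with hb2
      have key : exp (J * energy N σ) * exp (-2*J) ^ b1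
          = exp (J * energy N η) * exp (-2*J) ^ b2 := by
        rw [← Real.exp_nat_mul, ← Real.exp_nat_mul, ← Real.exp_add, ← Real.exp_add]
        congr 1
        linear_combination J * hE
      have hB : edgeBoundary (diffSet η σ) ∩ Bplus η = edgeBoundary (diffSet σ η) ∩ Bplus η := by
        rw [diffSet_comm η σ]
      linear_combination
        (((diffSet σ η).card : ℝ) / N * (1 - exp (-2*J)) ^ ((diffSet σ η).card - 1)) * key
  · have hg' : ¬ (IsArc (diffSet η σ) ∧ ConstOn η (diffSet η σ)) := by
      rw [diffSet_comm η σ]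
      intro hc
      refine hg ⟨hc.1, ?_⟩
      have h2 : ConstOn η (diffSet η σ) := by rw [diffSet_comm η σ]; exact hc.2
      have h3 := constOn_symm η σ h2
      rwa [diffSet_comm η σ] at h3
    unfold PW
    rw [if_neg hg, if_neg hg']
    ring

lemma sum_exp_pos : 0 < ∑ η : Config N, exp (J * energy N η) :=
  Finset.sum_pos (fun _ _ => Real.exp_pos _) Finset.univ_nonempty

lemma gibbs_pos (σ : Config N) : 0 < gibbs N J σ :=
  div_pos (Real.exp_pos _) sum_exp_pos

lemma sum_gibbs (N : ℕ) [NeZero N] (J : ℝ) : ∑ σ : Config N, gibbs N J σ = 1 := by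
  unfold gibbs
  rw [← Finset.sum_div, div_self (ne_of_gt sum_exp_pos)]

lemma gibbs_stationary (hrow : ∀ τ : Config N, ∑ c : Config N, PW N J τ c = 1)
    (η : Config N) : ∑ σ : Config N, gibbs N J σ * PW N J σ η = gibbs N J η := by
  unfold gibbs
  have h1 : ∀ σ : Config N, exp (J * energy N σ) / (∑ τ : Config N, exp (J * energy N τ)) * PW N J σ η
      = exp (J * energy N η) * PW N J η σ / (∑ τ : Config N, exp (J * energy N τ)) := by
    intro σ
    rw [div_mul_eq_mul_div, detailed_balance σ η]
  rw [Finset.sum_congr rfl fun σ _ => h1 σ, ← Finset.sum_div, ← Finset.mul_sum, hrow, mul_one]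

end Energy

section Poisson
set_option linter.unusedSectionVars false
open Matrix
variable {N : ℕ} [NeZero N] {J : ℝ}

lemma harmonic_const (hN : 3 ≤ N) (hJ : 0 ≤ J)
    (hrow : ∀ τ : Config N, ∑ c : Config N, PW N J τ c = 1)
    (v : Config N → ℝ) (hv : ∀ σ, v σ = ∑ η : Config N, PW N J σ η * v η)
    (σ τ : Config N) : v σ = v τ := by
  obtain ⟨s, -, hmax⟩ :=
    Finset.exists_max_image (Finset.univ : Finset (Config N)) v Finset.univ_nonempty
  suffices h : ∀ τ : Config N, v τ = v s by rw [h σ, h τ]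
  intro τ
  refine reach (fun τ => v τ = v s) ?_ s τ rfl
  intro σ' i hQ
  have h0 : ∑ η : Config N, PW N J σ' η * (v s - v η) = 0 := by
    have hs : ∑ η : Config N, PW N J σ' η * (v s - v η)
        = (∑ η : Config N, PW N J σ' η) * v s - ∑ η : Config N, PW N J σ' η * v η := by
      rw [Finset.sum_mul, ← Finset.sum_sub_distrib]
      exact Finset.sum_congr rfl fun η _ => by ring
    rw [hs, hrow σ', ← hv σ', one_mul, hQ, sub_self]
  have hterm := (Finset.sum_eq_zero_iff_of_nonneg (fun η _ =>
    mul_nonneg (PW_nonneg hJ σ' η) (by simpa using sub_nonneg.mpr (hmax η (Finset.mem_univ η))))).mp h0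
  have hflip := hterm (flipSpins {i} σ') (Finset.mem_univ _)
  have hp := PW_single_pos hN hJ σ' i
  have : v s - v (flipSpins {i} σ') = 0 := by
    rcases mul_eq_zero.mp hflip with h | h
    · exact absurd h (ne_of_gt hp)
    · exact h
  linarith

lemma poisson (hN : 3 ≤ N) (hJ : 0 ≤ J)
    (hrow : ∀ τ : Config N, ∑ c : Config N, PW N J τ c = 1) (g : Config N → ℝ) :
    ∃ f : Config N → ℝ, ∀ σ : Config N,
      f σ - ∑ η : Config N, PW N J σ η * f η = g σ - Emu N J g := by
  classical
  set M : Matrix (Config N) (Config N) ℝ := 1 - Matrix.of (PW N J) with hM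
  set L := M.mulVecLin with hL
  have hLapply : ∀ (u : Config N → ℝ) (σ : Config N),
      L u σ = u σ - ∑ η : Config N, PW N J σ η * u η := by
    intro u σ
    simp only [hL, hM, Matrix.mulVecLin_apply, Matrix.mulVec, dotProduct,
      Matrix.sub_apply, Matrix.one_apply, Matrix.of_apply, sub_mul, Finset.sum_sub_distrib]
    congr 1
    simp [Finset.sum_ite_eq]
  -- the all-ones vector
  set ones : Config N → ℝ := fun _ => 1 with hones
  have hones_ne : ones ≠ 0 := by
    intro h
    have := congrFun h (fun _ => true)
    simp [hones] at this
  have hker : LinearMap.ker L = Submodule.span ℝ {ones} := by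
    apply le_antisymm
    · intro v hv
      rw [LinearMap.mem_ker] at hv
      have hharm : ∀ σ : Config N, v σ = ∑ η : Config N, PW N J σ η * v η := by
        intro σ
        have := congrFun hv σ
        rw [hLapply] at this
        simp at this
        linarith [this]
      rw [Submodule.mem_span_singleton]
      refine ⟨v (fun _ => true), ?_⟩
      funext σ
      simp only [Pi.smul_apply, hones, smul_eq_mul, mul_one]
      exact harmonic_const hN hJ hrow v hharm σ _ |>.symm ▸ rfl
    · rw [Submodule.span_le, Set.singleton_subset_iff]
      rw [SetLike.mem_coe, LinearMap.mem_ker]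
      funext σ
      rw [hLapply]
      simp only [hones]
      rw [Finset.sum_congr rfl fun η _ => mul_one (PW N J σ η), hrow σ]
      simp
  have hkerrank : Module.finrank ℝ (LinearMap.ker L) = 1 := by
    rw [hker]
    exact finrank_span_singleton hones_ne
  -- the functional given by the Gibbs measure
  set φ : (Config N → ℝ) →ₗ[ℝ] ℝ :=
    { toFun := fun v => ∑ σ : Config N, gibbs N J σ * v σ
      map_add' := by intro x y; simp [mul_add, Finset.sum_add_distrib]
      map_smul' := by
        intro c x
        simp only [Pi.smul_apply, smul_eq_mul, RingHom.id_apply, Finset.mul_sum]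
        exact Finset.sum_congr rfl fun σ _ => by ring } with hφ
  have hφones : φ ones = 1 := by
    simp only [hφ, LinearMap.coe_mk, AddHom.coe_mk, hones, mul_one]
    exact sum_gibbs N J
  have hφsurj : LinearMap.range φ = ⊤ := by
    rw [LinearMap.range_eq_top]
    intro r
    refine ⟨r • ones, ?_⟩
    rw [_root_.map_smul, hφones, smul_eq_mul, mul_one]
  have hφrank : Module.finrank ℝ (LinearMap.range φ) = 1 := by
    rw [hφsurj]
    simpa using finrank_top ℝ ℝ
  have hrn1 := LinearMap.finrank_range_add_finrank_ker L
  have hrn2 := LinearMap.finrank_range_add_finrank_ker φ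
  have hrange_le : LinearMap.range L ≤ LinearMap.ker φ := by
    rintro v ⟨u, rfl⟩
    rw [LinearMap.mem_ker]
    simp only [hφ, LinearMap.coe_mk, AddHom.coe_mk]
    have hexp : ∀ σ : Config N, gibbs N J σ * L u σ
        = gibbs N J σ * u σ - ∑ η : Config N, gibbs N J σ * PW N J σ η * u η := by
      intro σ
      rw [hLapply, mul_sub, Finset.mul_sum]
      congr 1
      exact Finset.sum_congr rfl fun η _ => by ring
    rw [Finset.sum_congr rfl fun σ _ => hexp σ, Finset.sum_sub_distrib, Finset.sum_comm]
    have : ∀ η : Config N, ∑ σ : Config N, gibbs N J σ * PW N J σ η * u η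
        = gibbs N J η * u η := by
      intro η
      rw [← Finset.sum_mul, gibbs_stationary hrow η]
    rw [Finset.sum_congr rfl fun η _ => this η, sub_self]
  have hrange_eq : LinearMap.range L = LinearMap.ker φ := by
    refine Submodule.eq_of_le_of_finrank_le hrange_le ?_
    omega
  have hmem : (fun σ : Config N => g σ - Emu N J g) ∈ LinearMap.ker φ := by
    rw [LinearMap.mem_ker]
    simp only [hφ, LinearMap.coe_mk, AddHom.coe_mk]
    have : ∀ σ : Config N, gibbs N J σ * (g σ - Emu N J g)
        = g σ * gibbs N J σ - Emu N J g * gibbs N J σ := by intro σ; ring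
    rw [Finset.sum_congr rfl fun σ _ => this σ, Finset.sum_sub_distrib, ← Emu,
      ← Finset.mul_sum, sum_gibbs N J, mul_one, sub_self]
  rw [← hrange_eq] at hmem
  obtain ⟨u, hu⟩ := hmem
  refine ⟨u, fun σ => ?_⟩
  rw [← hLapply u σ, hu]

end Poisson

section Meas
set_option linter.unusedSectionVars false
open MeasureTheory

variable {N : ℕ} [NeZero N]

/-- Weight of a finite trajectory of the chain. -/
def pathWeight (N : ℕ) [NeZero N] (J : ℝ) (σ0 : Config N) (m : ℕ)
    (p : Fin (m+1) → Config N) : ℝ :=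
  (if p 0 = σ0 then (1 : ℝ) else 0) * ∏ j : Fin m, PW N J (p j.castSucc) (p j.succ)

lemma pathWeight_nonneg {J : ℝ} (hJ : 0 ≤ J) (σ0 : Config N) (m : ℕ)
    (p : Fin (m+1) → Config N) : 0 ≤ pathWeight N J σ0 m p := by
  unfold pathWeight
  apply mul_nonneg
  · split_ifs <;> norm_num
  · exact Finset.prod_nonneg fun j _ => PW_nonneg hJ _ _

lemma pathWeight_snoc {J : ℝ} (σ0 : Config N) (m : ℕ) (p : Fin (m+1) → Config N)
    (c : Config N) :
    pathWeight N J σ0 (m+1) (Fin.snoc p c) =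
      pathWeight N J σ0 m p * PW N J (p (Fin.last m)) c := by
  unfold pathWeight
  rw [Fin.prod_univ_castSucc]
  have h0 : (Fin.snoc p c : Fin (m+2) → Config N) 0 = p 0 := by
    rw [show (0 : Fin (m+2)) = Fin.castSucc 0 from rfl, Fin.snoc_castSucc]
  have hlast : (Fin.snoc p c : Fin (m+2) → Config N) ((Fin.last m).castSucc) = p (Fin.last m) := by
    rw [Fin.snoc_castSucc]
  have hlast2 : (Fin.snoc p c : Fin (m+2) → Config N) ((Fin.last m).succ) = c := by
    rw [Fin.succ_last, Fin.snoc_last]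
  have hfac : ∀ j : Fin m,
      PW N J ((Fin.snoc p c : Fin (m+2) → Config N) (j.castSucc.castSucc))
          ((Fin.snoc p c : Fin (m+2) → Config N) (j.castSucc.succ))
        = PW N J (p j.castSucc) (p j.succ) := by
    intro j
    rw [Fin.succ_castSucc, Fin.snoc_castSucc, Fin.snoc_castSucc]
  rw [h0, hlast, hlast2, Finset.prod_congr rfl fun j _ => hfac j]
  ring

lemma measurableSet_config_singleton (c : Config N) : MeasurableSet ({c} : Set (Config N)) := by
  have : ({c} : Set (Config N)) = ⋂ i : ZMod N, (fun σ : Config N => σ i) ⁻¹' {c i} := by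
    ext σ
    simp [funext_iff]
  rw [this]
  exact MeasurableSet.iInter fun i => (measurable_pi_apply i) (by trivial)

section WithChain

variable {J : ℝ} {σ0 : Config N}
variable {E : Type*} [MeasurableSpace E] {P : Measure E} [IsProbabilityMeasure P]
variable {Y : ℕ → E → Config N}

lemma measurable_pathEvent (hY : ∀ k, Measurable (Y k)) (m : ℕ) (p : Fin (m+1) → Config N) :
    MeasurableSet {e | ∀ j : Fin (m + 1), Y (j.val + 1) e = p j} := by
  have : {e | ∀ j : Fin (m + 1), Y (j.val + 1) e = p j}
      = ⋂ j : Fin (m+1), (Y (j.val + 1)) ⁻¹' {p j} := by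
    ext e; simp [Set.mem_iInter]
  rw [this]
  exact MeasurableSet.iInter fun j => (hY _) (measurableSet_config_singleton _)

lemma pathEvent_split (m : ℕ) (p : Fin (m+1) → Config N) :
    {e | ∀ j : Fin (m + 1), Y (j.val + 1) e = p j}
      = ⋃ c : Config N, {e | ∀ j : Fin (m + 2),
          Y (j.val + 1) e = (Fin.snoc p c : Fin (m+2) → Config N) j} := by
  ext e
  simp only [Set.mem_setOf_eq, Set.mem_iUnion]
  constructor
  · intro h
    refine ⟨Y (m + 2) e, ?_⟩
    intro j
    refine Fin.lastCases ?_ ?_ j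
    · rw [Fin.snoc_last]
      rfl
    · intro j'
      rw [Fin.snoc_castSucc]
      exact h j'
  · rintro ⟨c, hc⟩ j
    have := hc j.castSucc
    rwa [Fin.snoc_castSucc] at this

lemma rowsum_of_chain (hN : 3 ≤ N) (hJ : 0 ≤ J) (hY : ∀ k, Measurable (Y k))
    (hpath : ∀ (m : ℕ) (p : Fin (m + 1) → Config N),
      P {e | ∀ j : Fin (m + 1), Y (j.val + 1) e = p j}
        = ENNReal.ofReal (pathWeight N J σ0 m p)) :
    ∀ τ : Config N, ∑ c : Config N, PW N J τ c = 1 := by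
  have key : ∀ (m : ℕ) (p : Fin (m+1) → Config N),
      pathWeight N J σ0 m p
        = pathWeight N J σ0 m p * ∑ c : Config N, PW N J (p (Fin.last m)) c := by
    intro m p
    have hsplit := pathEvent_split (Y := Y) m p
    have hdisj : Pairwise (Function.onFun Disjoint fun c : Config N =>
        {e | ∀ j : Fin (m + 2), Y (j.val + 1) e = (Fin.snoc p c : Fin (m+2) → Config N) j}) := by
      intro c c' hcc'
      simp only [Function.onFun, Set.disjoint_left]
      intro e he he'
      apply hcc'
      have h1 := he (Fin.last (m+1))
      have h2 := he' (Fin.last (m+1))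
      rw [Fin.snoc_last] at h1 h2
      rw [← h1, ← h2]
    have hmeas : ∀ c : Config N, MeasurableSet {e | ∀ j : Fin (m + 2),
        Y (j.val + 1) e = (Fin.snoc p c : Fin (m+2) → Config N) j} :=
      fun c => measurable_pathEvent hY (m+1) _
    have h2 : P {e | ∀ j : Fin (m + 1), Y (j.val + 1) e = p j}
        = ∑ c : Config N, P {e | ∀ j : Fin (m + 2),
            Y (j.val + 1) e = (Fin.snoc p c : Fin (m+2) → Config N) j} := by
      rw [hsplit, measure_iUnion hdisj hmeas, tsum_fintype]
    rw [hpath m p] at h2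
    have h3 : ∀ c : Config N, P {e | ∀ j : Fin (m + 2),
        Y (j.val + 1) e = (Fin.snoc p c : Fin (m+2) → Config N) j}
        = ENNReal.ofReal (pathWeight N J σ0 m p * PW N J (p (Fin.last m)) c) := by
      intro c
      rw [hpath (m+1) (Fin.snoc p c), pathWeight_snoc]
    rw [Finset.sum_congr rfl fun c _ => h3 c] at h2
    have h4 := congrArg ENNReal.toReal h2
    rw [ENNReal.toReal_ofReal (pathWeight_nonneg hJ σ0 m p),
      ENNReal.toReal_sum (fun c _ => ENNReal.ofReal_ne_top),
      Finset.sum_congr rfl (fun c _ => ENNReal.toReal_ofReal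
        (mul_nonneg (pathWeight_nonneg hJ σ0 m p) (PW_nonneg hJ _ _)))] at h4
    rw [Finset.mul_sum]
    exact h4
  intro τ
  have hQ : ∃ (m : ℕ) (p : Fin (m+1) → Config N),
      p (Fin.last m) = τ ∧ 0 < pathWeight N J σ0 m p := by
    refine reach (fun τ => ∃ (m : ℕ) (p : Fin (m+1) → Config N),
      p (Fin.last m) = τ ∧ 0 < pathWeight N J σ0 m p) ?_ σ0 τ ?_
    · rintro σ i ⟨m, p, hlast, hw⟩
      refine ⟨m+1, Fin.snoc p (flipSpins {i} σ), by rw [Fin.snoc_last], ?_⟩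
      rw [pathWeight_snoc, hlast]
      exact mul_pos hw (PW_single_pos hN hJ σ i)
    · refine ⟨0, fun _ => σ0, rfl, ?_⟩
      unfold pathWeight
      simp
  obtain ⟨m, p, hlast, hw⟩ := hQ
  have hk := key m p
  rw [hlast] at hk
  have h5 : pathWeight N J σ0 m p * 1
      = pathWeight N J σ0 m p * ∑ c : Config N, PW N J τ c := by
    rw [mul_one, ← hk]
  exact (mul_left_cancel₀ (ne_of_gt hw) h5).symm

lemma chain_integral (hJ : 0 ≤ J) (hY : ∀ k, Measurable (Y k))
    (hpath : ∀ (m : ℕ) (p : Fin (m + 1) → Config N),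
      P {e | ∀ j : Fin (m + 1), Y (j.val + 1) e = p j}
        = ENNReal.ofReal (pathWeight N J σ0 m p))
    (m : ℕ) (H : (Fin (m+1) → Config N) → ℝ) :
    Integrable (fun e => H (fun j : Fin (m+1) => Y (j.val + 1) e)) P ∧
    ∫ e, H (fun j : Fin (m+1) => Y (j.val + 1) e) ∂P
      = ∑ p : Fin (m+1) → Config N, pathWeight N J σ0 m p * H p := by
  classical
  have hrepr : (fun e => H (fun j : Fin (m+1) => Y (j.val + 1) e))
      = fun e => ∑ p : Fin (m+1) → Config N,
          Set.indicator {e' | ∀ j : Fin (m + 1), Y (j.val + 1) e' = p j} (fun _ => H p) e := by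
    funext e
    have huniq : ∀ p : Fin (m+1) → Config N,
        Set.indicator {e' | ∀ j : Fin (m + 1), Y (j.val + 1) e' = p j} (fun _ => H p) e
          = if (fun j : Fin (m+1) => Y (j.val + 1) e) = p then H p else 0 := by
      intro p
      by_cases h : (fun j : Fin (m+1) => Y (j.val + 1) e) = p
      · rw [if_pos h, Set.indicator_of_mem]
        exact fun j => congrFun h j
      · rw [if_neg h, Set.indicator_of_notMem]
        intro hc
        exact h (funext fun j => hc j)
    rw [Finset.sum_congr rfl fun p _ => huniq p, Finset.sum_ite_eq]
    simp
  have hint : ∀ p : Fin (m+1) → Config N, Integrable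
      (Set.indicator {e' | ∀ j : Fin (m + 1), Y (j.val + 1) e' = p j} (fun _ => H p)) P :=
    fun p => (integrable_const (H p)).indicator (measurable_pathEvent hY m p)
  constructor
  · rw [hrepr]
    exact integrable_finset_sum _ fun p _ => hint p
  · rw [hrepr, integral_finset_sum _ fun p _ => hint p]
    refine Finset.sum_congr rfl fun p _ => ?_
    rw [integral_indicator_const _ (measurable_pathEvent hY m p), measureReal_def, hpath m p,
      ENNReal.toReal_ofReal (pathWeight_nonneg hJ σ0 m p), smul_eq_mul]

end WithChain
end Meas

section PathSum
set_option linter.unusedSectionVars false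
variable {N : ℕ} [NeZero N] {J : ℝ} {σ0 : Config N}

/-- Expectation of a path functional under the finite-dimensional chain law. -/
def pathSum (N : ℕ) [NeZero N] (J : ℝ) (σ0 : Config N) (m : ℕ)
    (H : (Fin (m+1) → Config N) → ℝ) : ℝ :=
  ∑ p : Fin (m+1) → Config N, pathWeight N J σ0 m p * H p

def pathEquiv {N : ℕ} (m : ℕ) : ((Fin (m+1) → Config N) × Config N) ≃ (Fin (m+2) → Config N) where
  toFun qc := Fin.snoc qc.1 qc.2
  invFun p := (Fin.init p, p (Fin.last (m+1)))
  left_inv qc := by simp [Fin.init_snoc, Fin.snoc_last]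
  right_inv p := by simp [Fin.snoc_init_self]

lemma pathSum_succ (m : ℕ) (H : (Fin (m+2) → Config N) → ℝ) :
    pathSum N J σ0 (m+1) H = ∑ q : Fin (m+1) → Config N, ∑ c : Config N,
      pathWeight N J σ0 m q * PW N J (q (Fin.last m)) c * H (Fin.snoc q c) := by
  unfold pathSum
  rw [← Equiv.sum_comp (pathEquiv m) (fun p => pathWeight N J σ0 (m+1) p * H p),
    Fintype.sum_prod_type]
  exact Finset.sum_congr rfl fun q _ => Finset.sum_congr rfl fun c _ => by
    simp only [pathEquiv, Equiv.coe_fn_mk]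
    rw [pathWeight_snoc]

lemma pathSum_mono (hJ : 0 ≤ J) (m : ℕ) {H H' : (Fin (m+1) → Config N) → ℝ}
    (h : ∀ p, H p ≤ H' p) : pathSum N J σ0 m H ≤ pathSum N J σ0 m H' :=
  Finset.sum_le_sum fun p _ => mul_le_mul_of_nonneg_left (h p) (pathWeight_nonneg hJ σ0 m p)

lemma pathSum_add (m : ℕ) (H H' : (Fin (m+1) → Config N) → ℝ) :
    pathSum N J σ0 m (fun p => H p + H' p) = pathSum N J σ0 m H + pathSum N J σ0 m H' := by
  unfold pathSum
  rw [← Finset.sum_add_distrib]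
  exact Finset.sum_congr rfl fun p _ => by ring

lemma pathSum_smul (m : ℕ) (r : ℝ) (H : (Fin (m+1) → Config N) → ℝ) :
    pathSum N J σ0 m (fun p => r * H p) = r * pathSum N J σ0 m H := by
  unfold pathSum
  rw [Finset.mul_sum]
  exact Finset.sum_congr rfl fun p _ => by ring

lemma pathSum_init (hrow : ∀ τ : Config N, ∑ c : Config N, PW N J τ c = 1)
    (m : ℕ) (G : (Fin (m+1) → Config N) → ℝ) :
    pathSum N J σ0 (m+1) (fun p => G (Fin.init p)) = pathSum N J σ0 m G := by
  rw [pathSum_succ]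
  unfold pathSum
  refine Finset.sum_congr rfl fun q _ => ?_
  have hterm : ∀ c : Config N,
      pathWeight N J σ0 m q * PW N J (q (Fin.last m)) c * G (Fin.init (Fin.snoc q c : Fin (m+2) → Config N))
      = (pathWeight N J σ0 m q * G q) * PW N J (q (Fin.last m)) c := by
    intro c
    rw [Fin.init_snoc]
    ring
  rw [Finset.sum_congr rfl fun c _ => hterm c, ← Finset.mul_sum, hrow, mul_one]

lemma pathSum_mart (hrow : ∀ τ : Config N, ∑ c : Config N, PW N J τ c = 1)
    (m : ℕ) (G : (Fin (m+1) → Config N) → ℝ) (f : Config N → ℝ) :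
    pathSum N J σ0 (m+1) (fun p => G (Fin.init p) *
      (f (p (Fin.last (m+1))) - ∑ η : Config N, PW N J (Fin.init p (Fin.last m)) η * f η)) = 0 := by
  rw [pathSum_succ]
  apply Finset.sum_eq_zero
  intro q _
  have hterm : ∀ c : Config N, pathWeight N J σ0 m q * PW N J (q (Fin.last m)) c *
      (G (Fin.init (Fin.snoc q c : Fin (m+2) → Config N)) *
        (f ((Fin.snoc q c : Fin (m+2) → Config N) (Fin.last (m+1))) -
        ∑ η : Config N, PW N J ((Fin.init (Fin.snoc q c : Fin (m+2) → Config N)) (Fin.last m)) η * f η))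
      = pathWeight N J σ0 m q * G q * (PW N J (q (Fin.last m)) c * f c
          - PW N J (q (Fin.last m)) c * ∑ η : Config N, PW N J (q (Fin.last m)) η * f η) := by
    intro c
    rw [Fin.init_snoc, Fin.snoc_last]
    ring
  rw [Finset.sum_congr rfl fun c _ => hterm c, ← Finset.mul_sum, Finset.sum_sub_distrib,
    ← Finset.sum_mul, hrow, one_mul, sub_self, mul_zero]

end PathSum

section Moments
set_option linter.unusedSectionVars false
variable {N : ℕ} [NeZero N] {J : ℝ} {σ0 : Config N}

/-- The martingale part of the chain, as a function of the path. -/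
def Mfun {N : ℕ} [NeZero N] (f Pf : Config N → ℝ) (n : ℕ) (p : Fin (n+1) → Config N) : ℝ :=
  ∑ k : Fin n, (f (p k.succ) - Pf (p k.castSucc))

lemma Mfun_zero (f Pf : Config N → ℝ) (p : Fin 1 → Config N) : Mfun f Pf 0 p = 0 := by
  simp [Mfun]

lemma Mfun_succ (f Pf : Config N → ℝ) (n : ℕ) (p : Fin (n+2) → Config N) :
    Mfun f Pf (n+1) p = Mfun f Pf n (Fin.init p)
      + (f (p (Fin.last (n+1))) - Pf (Fin.init p (Fin.last n))) := by
  unfold Mfun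
  rw [Fin.sum_univ_castSucc]
  rfl

lemma moment_bound (hJ : 0 ≤ J)
    (hrow : ∀ τ : Config N, ∑ c : Config N, PW N J τ c = 1)
    (f Pf : Config N → ℝ) (hPf : ∀ σ, Pf σ = ∑ η : Config N, PW N J σ η * f η)
    (C : ℝ) (hC1 : 1 ≤ C) (hfb : ∀ σ, |f σ| ≤ C) (hPfb : ∀ σ, |Pf σ| ≤ C)
    (hone : ∀ m : ℕ, pathSum N J σ0 m (fun _ => (1:ℝ)) = 1) :
    ∀ n : ℕ, pathSum N J σ0 n (fun p => (Mfun f Pf n p)^2) ≤ 4*C^2*n ∧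
      pathSum N J σ0 n (fun p => (Mfun f Pf n p)^4) ≤ 128*C^4*n^2 := by
  have hC0 : (0:ℝ) < C := lt_of_lt_of_le one_pos hC1
  have hconst : ∀ (m : ℕ) (r : ℝ), pathSum N J σ0 m (fun _ => r) = r := by
    intro m r
    have h2 : (fun _ : Fin (m+1) → Config N => r)
        = (fun p : Fin (m+1) → Config N => r * (fun _ : Fin (m+1) → Config N => (1:ℝ)) p) := by
      funext p; simp
    rw [h2]
    have h3 : pathSum N J σ0 m (fun p => r * (fun _ : Fin (m+1) → Config N => (1:ℝ)) p)
        = r * pathSum N J σ0 m (fun _ => (1:ℝ)) := pathSum_smul m r _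
    rw [h3, hone m, mul_one]
  intro n
  induction n with
  | zero =>
    have hz : (fun p : Fin 1 → Config N => (Mfun f Pf 0 p)^2) = fun _ => (0:ℝ) := by
      funext p; rw [Mfun_zero]; ring
    have hz4 : (fun p : Fin 1 → Config N => (Mfun f Pf 0 p)^4) = fun _ => (0:ℝ) := by
      funext p; rw [Mfun_zero]; ring
    rw [hz, hz4, hconst]
    norm_num
  | succ n ih =>
    obtain ⟨ih2, ih4⟩ := ih
    -- the increment bound
    have hb2 : ∀ p : Fin (n+2) → Config N,
        (f (p (Fin.last (n+1))) - Pf (Fin.init p (Fin.last n)))^2 ≤ 4*C^2 := by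
      intro p
      have h1 := abs_le.mp (hfb (p (Fin.last (n+1))))
      have h2 := abs_le.mp (hPfb (Fin.init p (Fin.last n)))
      nlinarith [h1.1, h1.2, h2.1, h2.2]
    -- martingale property instances
    have hz2 : pathSum N J σ0 (n+1) (fun p => 2 * Mfun f Pf n (Fin.init p) *
        (f (p (Fin.last (n+1))) - Pf (Fin.init p (Fin.last n)))) = 0 := by
      have hfun : (fun p : Fin (n+2) → Config N => 2 * Mfun f Pf n (Fin.init p) *
            (f (p (Fin.last (n+1))) - Pf (Fin.init p (Fin.last n))))
          = (fun p : Fin (n+2) → Config N => 2 * Mfun f Pf n (Fin.init p) *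
            (f (p (Fin.last (n+1)))
              - ∑ η : Config N, PW N J (Fin.init p (Fin.last n)) η * f η)) := by
        funext p; rw [hPf]
      rw [hfun]
      exact pathSum_mart hrow n (fun q => 2 * Mfun f Pf n q) f
    have hz4 : pathSum N J σ0 (n+1) (fun p => 4 * (Mfun f Pf n (Fin.init p))^3 *
        (f (p (Fin.last (n+1))) - Pf (Fin.init p (Fin.last n)))) = 0 := by
      have hfun : (fun p : Fin (n+2) → Config N => 4 * (Mfun f Pf n (Fin.init p))^3 *
            (f (p (Fin.last (n+1))) - Pf (Fin.init p (Fin.last n))))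
          = (fun p : Fin (n+2) → Config N => 4 * (Mfun f Pf n (Fin.init p))^3 *
            (f (p (Fin.last (n+1)))
              - ∑ η : Config N, PW N J (Fin.init p (Fin.last n)) η * f η)) := by
        funext p; rw [hPf]
      rw [hfun]
      exact pathSum_mart hrow n (fun q => 4 * (Mfun f Pf n q)^3) f
    -- init reductions
    have hi2 : pathSum N J σ0 (n+1) (fun p => (Mfun f Pf n (Fin.init p))^2)
        = pathSum N J σ0 n (fun q => (Mfun f Pf n q)^2) :=
      pathSum_init (σ0 := σ0) hrow n (fun q => (Mfun f Pf n q)^2)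
    have hi4 : pathSum N J σ0 (n+1) (fun p => (Mfun f Pf n (Fin.init p))^4)
        = pathSum N J σ0 n (fun q => (Mfun f Pf n q)^4) :=
      pathSum_init (σ0 := σ0) hrow n (fun q => (Mfun f Pf n q)^4)
    constructor
    · -- second moment
      have e0 : pathSum N J σ0 (n+1) (fun p => (Mfun f Pf (n+1) p)^2)
          = pathSum N J σ0 (n+1) (fun p => (Mfun f Pf n (Fin.init p))^2
            + (2 * Mfun f Pf n (Fin.init p) *
                (f (p (Fin.last (n+1))) - Pf (Fin.init p (Fin.last n)))
              + (f (p (Fin.last (n+1))) - Pf (Fin.init p (Fin.last n)))^2)) :=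
        congrArg _ (funext fun p => by rw [Mfun_succ]; ring)
      have s2 : pathSum N J σ0 (n+1) (fun p => (Mfun f Pf n (Fin.init p))^2
            + (2 * Mfun f Pf n (Fin.init p) *
                (f (p (Fin.last (n+1))) - Pf (Fin.init p (Fin.last n)))
              + (f (p (Fin.last (n+1))) - Pf (Fin.init p (Fin.last n)))^2))
          = pathSum N J σ0 (n+1) (fun p => (Mfun f Pf n (Fin.init p))^2)
            + (pathSum N J σ0 (n+1) (fun p => 2 * Mfun f Pf n (Fin.init p) *
                (f (p (Fin.last (n+1))) - Pf (Fin.init p (Fin.last n))))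
              + pathSum N J σ0 (n+1) (fun p =>
                (f (p (Fin.last (n+1))) - Pf (Fin.init p (Fin.last n)))^2)) := by
        rw [← pathSum_add]
        exact pathSum_add (n+1) _ _
      have hCbd : pathSum N J σ0 (n+1) (fun p =>
          (f (p (Fin.last (n+1))) - Pf (Fin.init p (Fin.last n)))^2) ≤ 4*C^2 := by
        have hm := pathSum_mono (σ0 := σ0) hJ (n+1)
          (H := fun p => (f (p (Fin.last (n+1))) - Pf (Fin.init p (Fin.last n)))^2)
          (H' := fun _ => 4*C^2) hb2
        rwa [hconst] at hm
      rw [e0, s2, hz2, hi2, zero_add]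
      push_cast
      nlinarith [hCbd, ih2]
    · -- fourth moment
      have e0 : pathSum N J σ0 (n+1) (fun p => (Mfun f Pf (n+1) p)^4)
          = pathSum N J σ0 (n+1) (fun p => (Mfun f Pf n (Fin.init p))^4
            + (4 * (Mfun f Pf n (Fin.init p))^3 *
                (f (p (Fin.last (n+1))) - Pf (Fin.init p (Fin.last n)))
              + (6 * (Mfun f Pf n (Fin.init p))^2 *
                  (f (p (Fin.last (n+1))) - Pf (Fin.init p (Fin.last n)))^2
                + 4 * Mfun f Pf n (Fin.init p) *
                  (f (p (Fin.last (n+1))) - Pf (Fin.init p (Fin.last n)))^3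
                + (f (p (Fin.last (n+1))) - Pf (Fin.init p (Fin.last n)))^4))) :=
        congrArg _ (funext fun p => by rw [Mfun_succ]; ring)
      have s4 : pathSum N J σ0 (n+1) (fun p => (Mfun f Pf n (Fin.init p))^4
            + (4 * (Mfun f Pf n (Fin.init p))^3 *
                (f (p (Fin.last (n+1))) - Pf (Fin.init p (Fin.last n)))
              + (6 * (Mfun f Pf n (Fin.init p))^2 *
                  (f (p (Fin.last (n+1))) - Pf (Fin.init p (Fin.last n)))^2
                + 4 * Mfun f Pf n (Fin.init p) *
                  (f (p (Fin.last (n+1))) - Pf (Fin.init p (Fin.last n)))^3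
                + (f (p (Fin.last (n+1))) - Pf (Fin.init p (Fin.last n)))^4)))
          = pathSum N J σ0 (n+1) (fun p => (Mfun f Pf n (Fin.init p))^4)
            + (pathSum N J σ0 (n+1) (fun p => 4 * (Mfun f Pf n (Fin.init p))^3 *
                (f (p (Fin.last (n+1))) - Pf (Fin.init p (Fin.last n))))
              + pathSum N J σ0 (n+1) (fun p =>
                6 * (Mfun f Pf n (Fin.init p))^2 *
                  (f (p (Fin.last (n+1))) - Pf (Fin.init p (Fin.last n)))^2
                + 4 * Mfun f Pf n (Fin.init p) *
                  (f (p (Fin.last (n+1))) - Pf (Fin.init p (Fin.last n)))^3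
                + (f (p (Fin.last (n+1))) - Pf (Fin.init p (Fin.last n)))^4)) := by
        rw [← pathSum_add]
        exact pathSum_add (n+1) _ _
      -- pointwise bound on the remainder
      have hpt : ∀ p : Fin (n+2) → Config N,
          6 * (Mfun f Pf n (Fin.init p))^2 *
            (f (p (Fin.last (n+1))) - Pf (Fin.init p (Fin.last n)))^2
          + 4 * Mfun f Pf n (Fin.init p) *
            (f (p (Fin.last (n+1))) - Pf (Fin.init p (Fin.last n)))^3
          + (f (p (Fin.last (n+1))) - Pf (Fin.init p (Fin.last n)))^4
          ≤ 32*C^2 * (Mfun f Pf n (Fin.init p))^2 + 48*C^4 := by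
        intro p
        set a := Mfun f Pf n (Fin.init p) with ha
        set b := f (p (Fin.last (n+1))) - Pf (Fin.init p (Fin.last n)) with hbdef
        have hb := hb2 p
        rw [← hbdef] at hb
        have h1 : 4*a*b^3 ≤ 2*(a^2*b^2) + 2*b^4 := by nlinarith [sq_nonneg (a*b - b^2)]
        have hd2 : b^4 ≤ 16*C^4 := by nlinarith [hb, sq_nonneg b, sq_nonneg C]
        have h3 : a^2*b^2 ≤ a^2*(4*C^2) := mul_le_mul_of_nonneg_left hb (sq_nonneg a)
        nlinarith [h1, hd2, h3, sq_nonneg a]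
      have hrem : pathSum N J σ0 (n+1) (fun p =>
            6 * (Mfun f Pf n (Fin.init p))^2 *
              (f (p (Fin.last (n+1))) - Pf (Fin.init p (Fin.last n)))^2
            + 4 * Mfun f Pf n (Fin.init p) *
              (f (p (Fin.last (n+1))) - Pf (Fin.init p (Fin.last n)))^3
            + (f (p (Fin.last (n+1))) - Pf (Fin.init p (Fin.last n)))^4)
          ≤ 32*C^2 * pathSum N J σ0 n (fun q => (Mfun f Pf n q)^2) + 48*C^4 := by
        have hm := pathSum_mono (σ0 := σ0) hJ (n+1)
          (H' := fun p => 32*C^2 * (Mfun f Pf n (Fin.init p))^2 + 48*C^4) hpt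
        have hsplit : pathSum N J σ0 (n+1)
            (fun p => 32*C^2 * (Mfun f Pf n (Fin.init p))^2 + 48*C^4)
            = pathSum N J σ0 (n+1) (fun p => 32*C^2 * (Mfun f Pf n (Fin.init p))^2)
              + pathSum N J σ0 (n+1) (fun _ => 48*C^4) :=
          pathSum_add (n+1) _ _
        have hsm : pathSum N J σ0 (n+1) (fun p => 32*C^2 * (Mfun f Pf n (Fin.init p))^2)
            = 32*C^2 * pathSum N J σ0 (n+1) (fun p => (Mfun f Pf n (Fin.init p))^2) :=
          pathSum_smul (n+1) _ _
        rw [hsplit, hsm, hconst, hi2] at hm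
        exact hm
      rw [e0, s4, hz4, hi4, zero_add]
      have hm2b : pathSum N J σ0 n (fun q => (Mfun f Pf n q)^2) ≤ 4*C^2*n := ih2
      push_cast
      nlinarith [hrem, ih4, hm2b, sq_nonneg C, pow_pos hC0 2, pow_pos hC0 4]

end Moments

open MeasureTheory Filter in
/-- **Ergodic theorem for the Wolff dynamics** in the subcritical regime:
if `(Y_k)_{k≥1}` is a Markov chain with transition matrix `P_W` started from an
arbitrary initial configuration `σ0` (encoded through its finite-dimensional
distributions), then for every `g : Ω → ℝ`, almost surely
`(1/M)∑_{k=1}^M g(Y_k) → E_{μ_N}[g]` as `M → ∞`. -/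
theorem wolff_ergodic_theorem (N : ℕ) (hN : 3 ≤ N) [NeZero N]
    (J : ℝ) (hJ : 0 ≤ J) (σ0 : Config N)
    {E : Type*} [MeasurableSpace E] (P : Measure E) [IsProbabilityMeasure P]
    (Y : ℕ → E → Config N) (hY : ∀ k, Measurable (Y k))
    (hpath : ∀ (m : ℕ) (path : Fin (m + 1) → Config N),
      P {e | ∀ j : Fin (m + 1), Y (j.val + 1) e = path j} =
        ENNReal.ofReal ((if path 0 = σ0 then (1 : ℝ) else 0) *
          ∏ j : Fin m, PW N J (path j.castSucc) (path j.succ)))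
    (g : Config N → ℝ) :
    ∀ᵐ e ∂P, Tendsto (fun M : ℕ => (∑ k ∈ Finset.Icc 1 M, g (Y k e)) / M)
      atTop (nhds (Emu N J g)) := by
  classical
  haveI : MeasurableSingletonClass (Config N) := ⟨measurableSet_config_singleton⟩
  have hpath' : ∀ (m : ℕ) (p : Fin (m + 1) → Config N),
      P {e | ∀ j : Fin (m + 1), Y (j.val + 1) e = p j}
        = ENNReal.ofReal (pathWeight N J σ0 m p) := fun m p => hpath m p
  have hrow := rowsum_of_chain hN hJ hY hpath'
  obtain ⟨f, hfP⟩ := poisson hN hJ hrow g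
  set Pf : Config N → ℝ := fun σ => ∑ η : Config N, PW N J σ η * f η with hPfdef
  have hPf : ∀ σ, Pf σ = ∑ η : Config N, PW N J σ η * f η := fun σ => rfl
  have hf : ∀ σ, f σ - Pf σ = g σ - Emu N J g := fun σ => hfP σ
  set C : ℝ := 1 + ∑ σ : Config N, |f σ| with hCdef
  have hsumabs : (0:ℝ) ≤ ∑ σ : Config N, |f σ| :=
    Finset.sum_nonneg fun _ _ => abs_nonneg _
  have hC1 : 1 ≤ C := by rw [hCdef]; linarith
  have hC0 : (0:ℝ) < C := lt_of_lt_of_le one_pos hC1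
  have hfb : ∀ σ, |f σ| ≤ C := by
    intro σ
    have h := Finset.single_le_sum (f := fun σ : Config N => |f σ|)
      (fun _ _ => abs_nonneg _) (Finset.mem_univ σ)
    rw [hCdef]; linarith
  have hPfb : ∀ σ, |Pf σ| ≤ C := by
    intro σ
    have h1 : |Pf σ| ≤ ∑ η : Config N, |PW N J σ η * f η| := by
      rw [hPf]
      exact Finset.abs_sum_le_sum_abs _ _
    have h2 : ∀ η : Config N, |PW N J σ η * f η| ≤ PW N J σ η * C := by
      intro η
      rw [abs_mul, abs_of_nonneg (PW_nonneg hJ σ η)]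
      exact mul_le_mul_of_nonneg_left (hfb η) (PW_nonneg hJ σ η)
    calc |Pf σ| ≤ ∑ η : Config N, PW N J σ η * C :=
          le_trans h1 (Finset.sum_le_sum fun η _ => h2 η)
      _ = C := by rw [← Finset.sum_mul, hrow, one_mul]
  have hone : ∀ m : ℕ, pathSum N J σ0 m (fun _ => (1:ℝ)) = 1 := by
    intro m
    have hb := (chain_integral hJ hY hpath' m (fun _ => (1:ℝ))).2
    rw [integral_const] at hb
    simp only [measureReal_def, measure_univ, ENNReal.toReal_one, smul_eq_mul, mul_one] at hb
    unfold pathSum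
    simp only [mul_one]
    exact hb.symm
  have hmom := moment_bound (σ0 := σ0) hJ hrow f Pf hPf C hC1 hfb hPfb hone
  set Mn : ℕ → E → ℝ := fun n e => Mfun f Pf n (fun j : Fin (n+1) => Y (j.val + 1) e)
    with hMndef
  have hint4 : ∀ n : ℕ, Integrable (fun e => (Mn n e)^4) P ∧
      ∫ e, (Mn n e)^4 ∂P = pathSum N J σ0 n (fun p => (Mfun f Pf n p)^4) :=
    fun n => chain_integral hJ hY hpath' n (fun p => (Mfun f Pf n p)^4)
  -- Borel–Cantelli
  have hBC : ∀ᵐ e ∂P, ∀ j : ℕ, ∀ᶠ n in atTop,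
      (Mn (n+1) e)^4 < ((1/((j:ℝ)+1)) * ((n:ℝ)+1))^4 := by
    rw [ae_all_iff]
    intro j
    set ε : ℝ := 1/((j:ℝ)+1) with hε
    have hε0 : 0 < ε := by positivity
    set s : ℕ → Set E := fun n => {e | (ε * ((n:ℝ)+1))^4 ≤ (Mn (n+1) e)^4} with hs
    have hPs : ∀ n : ℕ, P (s n) ≤ ENNReal.ofReal ((128*C^4/ε^4) * (1/((n:ℝ)+1)^2)) := by
      intro n
      have h4 := hint4 (n+1)
      have hnn : 0 ≤ᵐ[P] (fun e => (Mn (n+1) e)^4) := ae_of_all _ fun e => by positivity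
      have hmar := mul_meas_ge_le_integral_of_nonneg hnn h4.1 ((ε * ((n:ℝ)+1))^4)
      have hbd : ∫ e, (Mn (n+1) e)^4 ∂P ≤ 128*C^4*((n:ℝ)+1)^2 := by
        rw [h4.2]
        have hmm := (hmom (n+1)).2
        push_cast at hmm
        linarith [hmm]
      have hpos : (0:ℝ) < (ε * ((n:ℝ)+1))^4 := by positivity
      have htr : (P (s n)).toReal ≤ (128*C^4/ε^4) * (1/((n:ℝ)+1)^2) := by
        have h5 : (P (s n)).toReal ≤ (128*C^4*((n:ℝ)+1)^2) / (ε * ((n:ℝ)+1))^4 := by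
          rw [le_div_iff₀ hpos]
          calc (P (s n)).toReal * (ε * ((n:ℝ)+1))^4
              = (ε * ((n:ℝ)+1))^4 * (P (s n)).toReal := by ring
            _ ≤ ∫ e, (Mn (n+1) e)^4 ∂P := hmar
            _ ≤ _ := hbd
        have h6 : (128*C^4*((n:ℝ)+1)^2) / (ε * ((n:ℝ)+1))^4
            = (128*C^4/ε^4) * (1/((n:ℝ)+1)^2) := by
          have hn1 : ((n:ℝ)+1) ≠ 0 := by positivity
          field_simp
        rw [h6] at h5
        exact h5
      calc P (s n) = ENNReal.ofReal ((P (s n)).toReal) :=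
            (ENNReal.ofReal_toReal (measure_ne_top P _)).symm
        _ ≤ _ := ENNReal.ofReal_le_ofReal htr
    have hsummable : Summable (fun n : ℕ => (128*C^4/ε^4) * (1/((n:ℝ)+1)^2)) := by
      apply Summable.mul_left
      have h1 : Summable (fun n : ℕ => 1/((n:ℝ))^2) :=
        summable_one_div_nat_pow.mpr one_lt_two
      have h2 := (summable_nat_add_iff 1).mpr h1
      refine h2.congr fun n => ?_
      push_cast
      ring
    have htsum : (∑' n : ℕ, P (s n)) ≠ ⊤ := by
      have hle := ENNReal.tsum_le_tsum hPs
      have heq : (∑' n : ℕ, ENNReal.ofReal ((128*C^4/ε^4) * (1/((n:ℝ)+1)^2)))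
          = ENNReal.ofReal (∑' n : ℕ, (128*C^4/ε^4) * (1/((n:ℝ)+1)^2)) :=
        (ENNReal.ofReal_tsum_of_nonneg (fun n => by positivity) hsummable).symm
      rw [heq] at hle
      exact ne_top_of_le_ne_top ENNReal.ofReal_ne_top hle
    have hae := MeasureTheory.ae_eventually_notMem htsum
    filter_upwards [hae] with e he
    refine he.mono fun n hn => ?_
    exact not_le.mp hn
  filter_upwards [hBC] with e he
  -- representation of the partial sums
  have hMnrepr : ∀ M : ℕ, Mn M e
      = ∑ k ∈ Finset.range M, (f (Y (k+1+1) e) - Pf (Y (k+1) e)) := by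
    intro M
    calc Mn M e = ∑ k : Fin M,
          (fun k : ℕ => f (Y (k+1+1) e) - Pf (Y (k+1) e)) k.val := rfl
      _ = _ := Fin.sum_univ_eq_sum_range (fun k : ℕ => f (Y (k+1+1) e) - Pf (Y (k+1) e)) M
  have hsum_eq : ∀ M : ℕ, ∑ k ∈ Finset.Icc 1 M, g (Y k e)
      = M * Emu N J g + ((f (Y (0+1) e) - f (Y (M+1) e)) + Mn M e) := by
    intro M
    have hIcc : ∑ k ∈ Finset.Icc 1 M, g (Y k e)
        = ∑ k ∈ Finset.range M, g (Y (k+1) e) := by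
      induction M with
      | zero => simp
      | succ M ihM =>
        rw [Finset.sum_Icc_succ_top (by omega : 1 ≤ M+1), ihM, Finset.sum_range_succ]
    have hterm : ∀ k : ℕ, g (Y (k+1) e)
        = Emu N J g + (f (Y (k+1) e) - f (Y (k+1+1) e))
          + (f (Y (k+1+1) e) - Pf (Y (k+1) e)) := by
      intro k
      have h := hf (Y (k+1) e)
      linarith
    have htel := Finset.sum_range_sub' (fun k => f (Y (k+1) e)) M
    rw [hIcc, hMnrepr, Finset.sum_congr rfl fun k _ => hterm k,
      Finset.sum_add_distrib, Finset.sum_add_distrib, Finset.sum_const,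
      Finset.card_range, htel]
    push_cast
    ring
  -- Mn M / M → 0
  have hMn_div : Tendsto (fun M : ℕ => Mn M e / M) atTop (nhds 0) := by
    rw [Metric.tendsto_atTop]
    intro δ hδ
    obtain ⟨j, hj⟩ := exists_nat_one_div_lt hδ
    have hev := he j
    rw [eventually_atTop] at hev
    obtain ⟨N₁, hN₁⟩ := hev
    refine ⟨N₁ + 1, fun n hn => ?_⟩
    obtain ⟨m, rfl⟩ : ∃ m, n = m + 1 := ⟨n - 1, by omega⟩
    have h1 := hN₁ m (by omega)
    have habs : |Mn (m+1) e| < (1/((j:ℝ)+1)) * ((m:ℝ)+1) := by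
      by_contra hcon
      push_neg at hcon
      have h2 : ((1/((j:ℝ)+1)) * ((m:ℝ)+1))^4 ≤ |Mn (m+1) e|^4 :=
        pow_le_pow_left₀ (by positivity) hcon 4
      have h3 : |Mn (m+1) e|^4 = (Mn (m+1) e)^4 := by
        rw [← abs_pow, abs_of_nonneg (by positivity : (0:ℝ) ≤ (Mn (m+1) e)^4)]
      rw [h3] at h2
      linarith
    have hm1 : (0:ℝ) < (m:ℝ)+1 := by positivity
    rw [Real.dist_eq, sub_zero, abs_div]
    have hcast : |((m+1 : ℕ):ℝ)| = (m:ℝ)+1 := by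
      rw [abs_of_nonneg (by positivity)]
      push_cast
      ring
    rw [hcast, div_lt_iff₀ hm1]
    calc |Mn (m+1) e| < (1/((j:ℝ)+1)) * ((m:ℝ)+1) := habs
      _ < δ * ((m:ℝ)+1) := by
          exact mul_lt_mul_of_pos_right hj hm1
  -- boundary term / M → 0
  have htend1 : Tendsto (fun M : ℕ => (f (Y (0+1) e) - f (Y (M+1) e)) / M)
      atTop (nhds 0) := by
    refine squeeze_zero_norm (fun M => ?_) (tendsto_const_div_atTop_nhds_zero_nat (2*C))
    ·
      rw [norm_div, Real.norm_natCast]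
      have hnum : ‖f (Y (0+1) e) - f (Y (M+1) e)‖ ≤ 2*C := by
        rw [Real.norm_eq_abs]
        have := abs_sub (f (Y (0+1) e)) (f (Y (M+1) e))
        have h1 := hfb (Y (0+1) e)
        have h2 := hfb (Y (M+1) e)
        calc |f (Y (0+1) e) - f (Y (M+1) e)| ≤ |f (Y (0+1) e)| + |f (Y (M+1) e)| :=
              abs_sub _ _
          _ ≤ 2*C := by linarith
      gcongr
  have hfinal : Tendsto (fun M : ℕ =>
      Emu N J g + ((f (Y (0+1) e) - f (Y (M+1) e)) / M + Mn M e / M))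
      atTop (nhds (Emu N J g + (0 + 0))) :=
    tendsto_const_nhds.add (htend1.add hMn_div)
  rw [add_zero, add_zero] at hfinal
  refine hfinal.congr' ?_
  filter_upwards [eventually_ge_atTop 1] with M hM
  rw [hsum_eq M]
  have hM0 : ((M:ℝ)) ≠ 0 := Nat.cast_ne_zero.mpr (by omega)
  field_simp
end
end

section
/- Let N, M, c be positive integers with c ≤ N ≤ M. Let Y₁, …, Y_M ∈ {−1,+1}^N be such that Y_k ∈ {−𝟏, +𝟏} (the two constant vectors) for every k with c < k ≤ M, and set K = (1/(M·N))·∑_{k=1}^{M} Y_k·Y_k^T, an N×N real symmetric positive-semidefinite matrix. Then the largest eigenvalue satisfies λ₁(K) ≥ 1 − c/M ≥ 1 − N/M, and the second largest eigenvalue satisfies 0 ≤ λ₂(K) ≤ c/M ≤ N/M. -/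
open Finset

noncomputable section

section Aux

open Matrix

/-- Quadratic form of a sum of outer products. -/
private theorem quad_sum_aux (N M : ℕ) (Y : Fin M → Fin N → ℝ) (x : Fin N → ℝ) :
    x ⬝ᵥ ((∑ k : Fin M, Matrix.vecMulVec (Y k) (Y k)) *ᵥ x)
      = ∑ k : Fin M, (Y k ⬝ᵥ x) ^ 2 := by
  simp only [Matrix.mulVec, dotProduct, Matrix.sum_apply, Matrix.vecMulVec_apply,
    Finset.sum_mul, Finset.mul_sum, pow_two]
  refine Eq.trans (Finset.sum_congr rfl fun i _ => Finset.sum_comm) ?_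
  refine Eq.trans Finset.sum_comm ?_
  refine Finset.sum_congr rfl fun k _ => ?_
  refine Eq.trans Finset.sum_comm ?_
  exact Finset.sum_congr rfl fun j _ => Finset.sum_congr rfl fun i _ => by ring

/-- Trace of a real symmetric matrix is the sum of its eigenvalues. -/
private theorem trace_eq_sum_eig_aux {n : ℕ} {A : Matrix (Fin n) (Fin n) ℝ}
    (hA : A.IsHermitian) : A.trace = ∑ i, hA.eigenvalues i := by
  classical
  rw [hA.trace_eq_sum_eigenvalues]
  simp

/-- If `t` dominates all eigenvalues of a Hermitian matrix `A`, then `t • 1 - A` is PSD. -/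
private theorem shift_posSemidef_aux {n : ℕ} {A : Matrix (Fin n) (Fin n) ℝ}
    (hA : A.IsHermitian) (t : ℝ) (ht : ∀ i, hA.eigenvalues i ≤ t) :
    (t • (1 : Matrix (Fin n) (Fin n) ℝ) - A).PosSemidef := by
  classical
  have key : t • (1 : Matrix (Fin n) (Fin n) ℝ) - A
      = (hA.eigenvectorUnitary : Matrix (Fin n) (Fin n) ℝ) *
        Matrix.diagonal (fun i => t - hA.eigenvalues i) *
        (hA.eigenvectorUnitary : Matrix (Fin n) (Fin n) ℝ)ᴴ := by
    have hd : Matrix.diagonal (fun i => t - hA.eigenvalues i)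
        = t • (1 : Matrix (Fin n) (Fin n) ℝ) - Matrix.diagonal hA.eigenvalues := by
      ext i j
      rcases eq_or_ne i j with rfl | h
      · simp
      · simp [Matrix.diagonal_apply_ne _ h, Matrix.one_apply_ne h]
    rw [hd, Matrix.mul_sub, Matrix.sub_mul]
    congr 1
    · rw [Matrix.mul_smul, Matrix.smul_mul, mul_one, ← Matrix.star_eq_conjTranspose,
        Matrix.mem_unitaryGroup_iff.mp hA.eigenvectorUnitary.2]
    · rw [← Matrix.star_eq_conjTranspose]
      have h2 := hA.spectral_theorem
      simp only [RCLike.ofReal_real_eq_id, Function.id_comp] at h2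
      exact h2
  rw [key]
  exact (Matrix.PosSemidef.diagonal (fun i => by simpa using ht i)).mul_mul_conjTranspose_same _

/-- Rayleigh-type bound: quadratic form is at most `t * ‖x‖²` if `t` dominates eigenvalues. -/
private theorem quadform_le_aux {n : ℕ} {A : Matrix (Fin n) (Fin n) ℝ}
    (hA : A.IsHermitian) (t : ℝ) (ht : ∀ i, hA.eigenvalues i ≤ t) (x : Fin n → ℝ) :
    x ⬝ᵥ (A *ᵥ x) ≤ t * (x ⬝ᵥ x) := by
  have h := (shift_posSemidef_aux hA t ht).dotProduct_mulVec_nonneg x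
  simp only [Matrix.sub_mulVec, Matrix.smul_mulVec, Matrix.one_mulVec,
    dotProduct_sub, dotProduct_smul, star_trivial, smul_eq_mul] at h
  linarith

private theorem card_filter_aux (M c : ℕ) :
    (Finset.univ.filter fun k : Fin M => c ≤ (k : ℕ)).card = M - c := by
  rcases lt_or_ge c M with h | h
  · have : (Finset.univ.filter fun k : Fin M => c ≤ (k : ℕ)) = Finset.Ici ⟨c, h⟩ := by
      ext k; simp [Fin.le_def]
    rw [this, Fin.card_Ici]
  · have : (Finset.univ.filter fun k : Fin M => c ≤ (k : ℕ)) = ∅ := by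
      ext k; simp; omega
    rw [this]; simp; omega

end Aux

open scoped Classical in
/-- `eigVal A i` is the `(i+1)`-st largest eigenvalue (with multiplicity) of a
real symmetric matrix `A` (and `0` if `A` is not symmetric or `i` is out of
range): the eigenvalues of `A` sorted in decreasing order. -/
noncomputable def eigVal {n : ℕ} (A : Matrix (Fin n) (Fin n) ℝ) (i : ℕ) : ℝ :=
  if h : i < n then
    if hA : A.IsHermitian then
      (hA.eigenvalues ∘ Tuple.sort hA.eigenvalues) (Fin.rev ⟨i, h⟩)
    else 0
  else 0

open Matrix

/-- **Eigenvalue bounds for the sample covariance matrix when all but at most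
`c` samples are fully aligned.**  Let `c ≤ N ≤ M` be positive integers and let
`Y₁,…,Y_M ∈ {−1,+1}^N` be such that `Y_k` is one of the two constant vectors
`±𝟏` for every `k` with `c < k ≤ M`.  Then for
`K = (1/(MN)) ∑_{k=1}^M Y_k Y_kᵀ`, the largest eigenvalue satisfies
`λ₁(K) ≥ 1 − c/M ≥ 1 − N/M` and the second largest satisfies
`0 ≤ λ₂(K) ≤ c/M ≤ N/M`. -/
theorem sample_covariance_eigenvalue_bounds (N M c : ℕ)
    (hc : 0 < c) (hcN : c ≤ N) (hNM : N ≤ M)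
    (Y : Fin M → Fin N → ℝ)
    (hY : ∀ k i, Y k i = 1 ∨ Y k i = -1)
    (hconst : ∀ k : Fin M, c < (k : ℕ) + 1 →
      ((∀ i, Y k i = 1) ∨ (∀ i, Y k i = -1)))
    (K : Matrix (Fin N) (Fin N) ℝ)
    (hK : K = (1 / ((M : ℝ) * N)) • ∑ k : Fin M, Matrix.vecMulVec (Y k) (Y k)) :
    (1 - (c : ℝ) / M ≤ eigVal K 0 ∧ 1 - (N : ℝ) / M ≤ 1 - (c : ℝ) / M) ∧
    (0 ≤ eigVal K 1 ∧ eigVal K 1 ≤ (c : ℝ) / M ∧ (c : ℝ) / M ≤ (N : ℝ) / M) := by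
  classical
  have hN0 : 0 < N := lt_of_lt_of_le hc hcN
  have hM0 : 0 < M := lt_of_lt_of_le hN0 hNM
  have hMR : (0 : ℝ) < M := by exact_mod_cast hM0
  have hNR : (0 : ℝ) < N := by exact_mod_cast hN0
  -- quadratic form of K
  have hquad : ∀ x : Fin N → ℝ,
      x ⬝ᵥ (K *ᵥ x) = (1 / ((M : ℝ) * N)) * ∑ k : Fin M, (Y k ⬝ᵥ x) ^ 2 := by
    intro x
    rw [hK, Matrix.smul_mulVec, dotProduct_smul, smul_eq_mul,
      quad_sum_aux]
  -- K is Hermitian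
  have hH : K.IsHermitian := by
    show Kᴴ = K
    ext i j
    simp [hK, Matrix.conjTranspose_apply, Matrix.sum_apply, Matrix.vecMulVec_apply, mul_comm]
  -- K is PSD
  have hPSD : K.PosSemidef := by
    refine Matrix.PosSemidef.of_dotProduct_mulVec_nonneg hH fun x => ?_
    rw [star_trivial, hquad x]
    positivity
  -- trace of K is 1
  have htr : K.trace = 1 := by
    rw [hK, Matrix.trace_smul, Matrix.trace_sum]
    have : ∀ k : Fin M, (Matrix.vecMulVec (Y k) (Y k)).trace = (N : ℝ) := by
      intro k
      rw [Matrix.trace]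
      have : ∀ i, Matrix.diag (Matrix.vecMulVec (Y k) (Y k)) i = 1 := by
        intro i
        rcases hY k i with h | h <;>
          simp [Matrix.diag, Matrix.vecMulVec_apply, h]
      rw [Finset.sum_congr rfl fun i _ => this i]
      simp
    rw [Finset.sum_congr rfl fun k _ => this k]
    simp
    field_simp
  -- sorted eigenvalue function
  set f : Fin N → ℝ := hH.eigenvalues ∘ Tuple.sort hH.eigenvalues with hf
  have hmono : Monotone f := Tuple.monotone_sort hH.eigenvalues
  have hnonneg : ∀ i, 0 ≤ f i := fun i => hPSD.eigenvalues_nonneg _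
  have hsumf : ∑ i, f i = 1 := by
    have := Equiv.sum_comp (Tuple.sort hH.eigenvalues) hH.eigenvalues
    rw [hf]
    simp only [Function.comp]
    rw [this, ← trace_eq_sum_eig_aux hH, htr]
  have h0 : (0 : ℕ) < N := hN0
  have e0 : eigVal K 0 = f (Fin.rev ⟨0, h0⟩) := by
    rw [eigVal, dif_pos h0, dif_pos hH]
  -- every eigenvalue is at most eigVal K 0
  have htop : ∀ j, hH.eigenvalues j ≤ eigVal K 0 := by
    intro j
    rw [e0]
    have h1 : hH.eigenvalues j = f ((Tuple.sort hH.eigenvalues).symm j) := by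
      rw [hf]; simp
    rw [h1]
    apply hmono
    rw [Fin.le_def]
    have := (((Tuple.sort hH.eigenvalues).symm j)).isLt
    simp [Fin.rev]
    omega
  -- quadratic form at the all-ones vector
  set o : Fin N → ℝ := fun _ => 1 with ho
  have hoo : o ⬝ᵥ o = (N : ℝ) := by simp [ho, dotProduct]
  have hsum_lb : ((M : ℝ) - c) * (N : ℝ) ^ 2 ≤ ∑ k : Fin M, (Y k ⬝ᵥ o) ^ 2 := by
    have hsub : ∀ k ∈ Finset.univ.filter fun k : Fin M => c ≤ (k : ℕ),
        (Y k ⬝ᵥ o) ^ 2 = (N : ℝ) ^ 2 := by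
      intro k hk
      simp only [Finset.mem_filter] at hk
      have hdot : Y k ⬝ᵥ o = (N : ℝ) ∨ Y k ⬝ᵥ o = -(N : ℝ) := by
        rcases hconst k (by omega) with h | h
        · left; simp [dotProduct, ho, Finset.sum_congr rfl fun i _ => h i]
        · right
          simp only [dotProduct, ho, mul_one]
          rw [Finset.sum_congr rfl fun i _ => h i]
          simp
      rcases hdot with h | h <;> rw [h] <;> ring
    calc ((M : ℝ) - c) * (N : ℝ) ^ 2
        = ((M - c : ℕ) : ℝ) * (N : ℝ) ^ 2 := by
          rw [Nat.cast_sub (le_trans hcN hNM)]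
      _ = ∑ k ∈ Finset.univ.filter fun k : Fin M => c ≤ (k : ℕ), (Y k ⬝ᵥ o) ^ 2 := by
          rw [Finset.sum_congr rfl hsub, Finset.sum_const, card_filter_aux]
          simp [mul_comm]
      _ ≤ ∑ k : Fin M, (Y k ⬝ᵥ o) ^ 2 := by
          apply Finset.sum_le_sum_of_subset_of_nonneg (Finset.filter_subset _ _)
          intro k _ _
          positivity
  -- lower bound on the top eigenvalue
  have hlam1 : 1 - (c : ℝ) / M ≤ eigVal K 0 := by
    have hub := quadform_le_aux hH (eigVal K 0) htop o
    rw [hquad o, hoo] at hub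
    have hkey : ((M : ℝ) - c) * (N : ℝ) ^ 2 ≤ (eigVal K 0 * M) * (N : ℝ) ^ 2 := by
      have h1 : (1 / ((M : ℝ) * N)) * (((M : ℝ) - c) * (N : ℝ) ^ 2)
          ≤ (1 / ((M : ℝ) * N)) * ∑ k : Fin M, (Y k ⬝ᵥ o) ^ 2 := by
        apply mul_le_mul_of_nonneg_left hsum_lb
        positivity
      have h2 : (1 / ((M : ℝ) * N)) * (((M : ℝ) - c) * (N : ℝ) ^ 2)
          = (((M : ℝ) - c) * N) / M := by field_simp
      have h4 : (((M : ℝ) - c) * N) / M ≤ eigVal K 0 * N := h2 ▸ h1.trans hub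
      rw [div_le_iff₀ hMR] at h4
      nlinarith [hNR]
    have h5 : ((M : ℝ) - c) ≤ eigVal K 0 * M :=
      le_of_mul_le_mul_right hkey (by positivity)
    rw [show (1 : ℝ) - (c : ℝ) / M = ((M : ℝ) - c) / M by field_simp, div_le_iff₀ hMR]
    linarith
  have hcMdiv : (c : ℝ) / M ≤ (N : ℝ) / M := by
    have : (c : ℝ) ≤ (N : ℝ) := by exact_mod_cast hcN
    gcongr
  refine ⟨⟨hlam1, by linarith⟩, ?_⟩
  -- second eigenvalue
  by_cases h1 : (1 : ℕ) < N
  · have e1 : eigVal K 1 = f (Fin.rev ⟨1, h1⟩) := by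
      rw [eigVal, dif_pos h1, dif_pos hH]
    have hne : Fin.rev ⟨0, h0⟩ ≠ Fin.rev (⟨1, h1⟩ : Fin N) := by
      simp [Fin.rev, Fin.ext_iff]
      omega
    have hadd : f (Fin.rev ⟨0, h0⟩) + f (Fin.rev ⟨1, h1⟩) ≤ ∑ i, f i :=
      Finset.add_le_sum (fun i _ => hnonneg i) (Finset.mem_univ _) (Finset.mem_univ _) hne
    rw [hsumf] at hadd
    refine ⟨by rw [e1]; exact hnonneg _, ?_, hcMdiv⟩
    rw [e1]
    rw [e0] at hlam1
    linarith
  · have e1 : eigVal K 1 = 0 := by rw [eigVal, dif_neg h1]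
    rw [e1]
    exact ⟨le_refl 0, by positivity, hcMdiv⟩
end
end
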